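/- Let d ≥ 2, t₀ > 0, and ψ : [0,∞) → ℝ be Lipschitz with ψ(t) = 0 for all t ≥ t₀. Define Φ : ℝ^d → ℝ^d by Φ(x) = R_{ψ(‖x‖)}(x), where R_θ rotates the first two coordinates by θ. Then Φ is a bijection, Φ is (Lip(ψ)·t₀ + 1)-bilipschitz, and Φ(x) = x for all x outside the open ball B(0, t₀). -/

import Mathlib

/-- `f` is `L`-bilipschitz on the set `s`. -/
def IsBilipOn {α β : Type*} [PseudoMetricSpace α] [PseudoMetricSpace β]
    (L : ℝ) (f : α → β) (s : Set α) : Prop :=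
  ∀ x ∈ s, ∀ y ∈ s, L⁻¹ * dist x y ≤ dist (f x) (f y) ∧ dist (f x) (f y) ≤ L * dist x y

section Aux

variable {d : ℕ} (hd : 2 ≤ d)

/-- Split a sum over `Fin d` into the terms at indices 0, 1 and the rest. -/
lemma aux_sum_split (h : Fin d → ℝ) :
    ∑ i, h i = h ⟨0, by linarith⟩ + h ⟨1, by linarith⟩ +
      ∑ i ∈ (Finset.univ.erase ⟨0, by linarith⟩).erase ⟨1, by linarith⟩, h i := by
  have h01 : (⟨1, by linarith⟩ : Fin d) ∈ Finset.univ.erase (⟨0, by linarith⟩ : Fin d) := by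
    simp [Fin.ext_iff]
  rw [← Finset.add_sum_erase _ h (Finset.mem_univ (⟨0, by linarith⟩ : Fin d)),
    ← Finset.add_sum_erase _ h h01]
  ring

lemma aux_norm_sq (v : EuclideanSpace ℝ (Fin d)) : ‖v‖ ^ 2 = ∑ i, (v i) ^ 2 := by
  rw [EuclideanSpace.norm_eq, Real.sq_sqrt (by positivity)]
  simp [sq_abs]

variable (R : ℝ → EuclideanSpace ℝ (Fin d) → EuclideanSpace ℝ (Fin d))
variable (hR : ∀ (θ : ℝ) (x : EuclideanSpace ℝ (Fin d)),
      R θ x ⟨0, by linarith⟩ = Real.cos θ * x ⟨0, by linarith⟩ - Real.sin θ * x ⟨1, by linarith⟩ ∧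
      R θ x ⟨1, by linarith⟩ = Real.sin θ * x ⟨0, by linarith⟩ + Real.cos θ * x ⟨1, by linarith⟩ ∧
      ∀ i : Fin d, i ≠ ⟨0, by linarith⟩ → i ≠ ⟨1, by linarith⟩ → R θ x i = x i)

include hd hR

lemma aux_R_zero (x : EuclideanSpace ℝ (Fin d)) : R 0 x = x := by
  obtain ⟨h0, h1, h2⟩ := hR 0 x
  ext i
  by_cases hi0 : i = ⟨0, by linarith⟩
  · subst hi0; simp [h0]
  by_cases hi1 : i = ⟨1, by linarith⟩
  · subst hi1; simp [h1]
  · exact h2 i hi0 hi1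

lemma aux_R_comp (α β : ℝ) (x : EuclideanSpace ℝ (Fin d)) :
    R α (R β x) = R (α + β) x := by
  obtain ⟨h0, h1, h2⟩ := hR β x
  obtain ⟨g0, g1, g2⟩ := hR α (R β x)
  obtain ⟨k0, k1, k2⟩ := hR (α + β) x
  ext i
  by_cases hi0 : i = ⟨0, by linarith⟩
  · subst hi0
    rw [g0, h0, h1, k0, Real.cos_add, Real.sin_add]; ring
  by_cases hi1 : i = ⟨1, by linarith⟩
  · subst hi1
    rw [g1, h0, h1, k1, Real.cos_add, Real.sin_add]; ring
  · rw [g2 i hi0 hi1, h2 i hi0 hi1, k2 i hi0 hi1]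

lemma aux_norm_R (θ : ℝ) (x : EuclideanSpace ℝ (Fin d)) : ‖R θ x‖ = ‖x‖ := by
  obtain ⟨h0, h1, h2⟩ := hR θ x
  have hsq : ‖R θ x‖ ^ 2 = ‖x‖ ^ 2 := by
    rw [aux_norm_sq, aux_norm_sq, aux_sum_split hd (fun i => (R θ x i) ^ 2),
      aux_sum_split hd (fun i => (x i) ^ 2)]
    have hsum : ∑ i ∈ (Finset.univ.erase ⟨0, by linarith⟩).erase ⟨1, by linarith⟩, (R θ x i) ^ 2 =
        ∑ i ∈ (Finset.univ.erase ⟨0, by linarith⟩).erase ⟨1, by linarith⟩, (x i) ^ 2 := by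
      refine Finset.sum_congr rfl fun i hi => ?_
      rw [h2 i (Finset.ne_of_mem_erase (Finset.mem_of_mem_erase hi)) (Finset.ne_of_mem_erase hi)]
    rw [hsum, h0, h1]
    have := Real.sin_sq_add_cos_sq θ
    ring_nf
    nlinarith [Real.sin_sq_add_cos_sq θ]
  have h1' : (0:ℝ) ≤ ‖R θ x‖ := norm_nonneg _
  have h2' : (0:ℝ) ≤ ‖x‖ := norm_nonneg _
  nlinarith

lemma aux_R_sub (θ : ℝ) (x y : EuclideanSpace ℝ (Fin d)) :
    R θ x - R θ y = R θ (x - y) := by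
  obtain ⟨h0, h1, h2⟩ := hR θ x
  obtain ⟨g0, g1, g2⟩ := hR θ y
  obtain ⟨k0, k1, k2⟩ := hR θ (x - y)
  ext i
  have hsub : ∀ (a b : EuclideanSpace ℝ (Fin d)) (j : Fin d), (a - b) j = a j - b j :=
    fun a b j => rfl
  by_cases hi0 : i = ⟨0, by linarith⟩
  · subst hi0; rw [hsub, h0, g0, k0, hsub, hsub]; ring
  by_cases hi1 : i = ⟨1, by linarith⟩
  · subst hi1; rw [hsub, h1, g1, k1, hsub, hsub]; ring
  · rw [hsub, h2 i hi0 hi1, g2 i hi0 hi1, k2 i hi0 hi1, hsub]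

lemma aux_dist_R (θ : ℝ) (x y : EuclideanSpace ℝ (Fin d)) :
    dist (R θ x) (R θ y) = dist x y := by
  rw [dist_eq_norm, dist_eq_norm, aux_R_sub hd R hR, aux_norm_R hd R hR]

lemma aux_dist_RR (α β : ℝ) (x : EuclideanSpace ℝ (Fin d)) :
    dist (R α x) (R β x) ≤ |α - β| * ‖x‖ := by
  obtain ⟨h0, h1, h2⟩ := hR α x
  obtain ⟨g0, g1, g2⟩ := hR β x
  have hsub : ∀ (a b : EuclideanSpace ℝ (Fin d)) (j : Fin d), (a - b) j = a j - b j :=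
    fun a b j => rfl
  have hdist : dist (R α x) (R β x) = ‖R α x - R β x‖ := dist_eq_norm _ _
  -- bound the square of the norm
  have hkey : ‖R α x - R β x‖ ^ 2 ≤ (|α - β| * ‖x‖) ^ 2 := by
    rw [aux_norm_sq, aux_sum_split hd]
    have hrest : ∑ i ∈ (Finset.univ.erase ⟨0, by linarith⟩).erase ⟨1, by linarith⟩,
        ((R α x - R β x) i) ^ 2 = 0 := by
      refine Finset.sum_eq_zero fun i hi => ?_
      rw [hsub, h2 i (Finset.ne_of_mem_erase (Finset.mem_of_mem_erase hi))
        (Finset.ne_of_mem_erase hi), g2 i (Finset.ne_of_mem_erase (Finset.mem_of_mem_erase hi))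
        (Finset.ne_of_mem_erase hi)]
      simp
    rw [hrest, hsub, hsub, h0, g0, h1, g1]
    set x0 := x ⟨0, by linarith⟩
    set x1 := x ⟨1, by linarith⟩
    have hxsq : x0 ^ 2 + x1 ^ 2 ≤ ‖x‖ ^ 2 := by
      rw [aux_norm_sq, aux_sum_split hd]
      have : (0:ℝ) ≤ ∑ i ∈ (Finset.univ.erase ⟨0, by linarith⟩).erase ⟨1, by linarith⟩, (x i) ^ 2 :=
        Finset.sum_nonneg fun i _ => sq_nonneg _
      simp only [x0, x1]
      linarith
    -- trig bound : (cos α - cos β)^2 + (sin α - sin β)^2 ≤ (α - β)^2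
    have htrig : (Real.cos α - Real.cos β) ^ 2 + (Real.sin α - Real.sin β) ^ 2
        ≤ (α - β) ^ 2 := by
      have e1 : Real.cos (2 * ((α - β)/2)) = 2 * Real.cos ((α - β)/2) ^ 2 - 1 :=
        Real.cos_two_mul _
      have e2 : Real.sin ((α - β)/2) ^ 2 + Real.cos ((α - β)/2) ^ 2 = 1 :=
        Real.sin_sq_add_cos_sq _
      have e3 : Real.sin ((α - β)/2) ^ 2 ≤ ((α - β)/2) ^ 2 := Real.sin_sq_le_sq
      have e4 : Real.cos (α - β) = Real.cos α * Real.cos β + Real.sin α * Real.sin β :=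
        Real.cos_sub α β
      have e5 : (2 : ℝ) * ((α - β)/2) = α - β := by ring
      rw [e5] at e1
      have ea : Real.sin α ^ 2 + Real.cos α ^ 2 = 1 := Real.sin_sq_add_cos_sq α
      have eb : Real.sin β ^ 2 + Real.cos β ^ 2 = 1 := Real.sin_sq_add_cos_sq β
      nlinarith
    have habs : |α - β| ^ 2 = (α - β) ^ 2 := sq_abs _
    have expand : (Real.cos α * x0 - Real.sin α * x1 - (Real.cos β * x0 - Real.sin β * x1)) ^ 2
        + (Real.sin α * x0 + Real.cos α * x1 - (Real.sin β * x0 + Real.cos β * x1)) ^ 2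
        = ((Real.cos α - Real.cos β) ^ 2 + (Real.sin α - Real.sin β) ^ 2) * (x0 ^ 2 + x1 ^ 2) := by
      ring
    rw [mul_pow, habs]
    calc (Real.cos α * x0 - Real.sin α * x1 - (Real.cos β * x0 - Real.sin β * x1)) ^ 2
        + (Real.sin α * x0 + Real.cos α * x1 - (Real.sin β * x0 + Real.cos β * x1)) ^ 2 + 0
        = ((Real.cos α - Real.cos β) ^ 2 + (Real.sin α - Real.sin β) ^ 2)
            * (x0 ^ 2 + x1 ^ 2) := by rw [← expand]; ring
      _ ≤ (α - β) ^ 2 * ‖x‖ ^ 2 := by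
          apply mul_le_mul htrig hxsq (by positivity) (sq_nonneg _)
  rw [hdist]
  have hn : (0:ℝ) ≤ ‖R α x - R β x‖ := norm_nonneg _
  have hm : (0:ℝ) ≤ |α - β| * ‖x‖ := by positivity
  nlinarith

/-- The key Lipschitz estimate for `x ↦ R (φ ‖x‖) x`. -/
lemma aux_lip (t₀ : ℝ) (ht₀ : 0 < t₀) (φ : ℝ → ℝ) (K : NNReal)
    (hφ : LipschitzOnWith K φ (Set.Ici 0))
    (hφ0 : ∀ t : ℝ, t₀ ≤ t → φ t = 0)
    (x y : EuclideanSpace ℝ (Fin d)) :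
    dist (R (φ ‖x‖) x) (R (φ ‖y‖) y) ≤ ((K : ℝ) * t₀ + 1) * dist x y := by
  -- reduce to the case ‖y‖ ≤ ‖x‖ by symmetry
  have main : ∀ x y : EuclideanSpace ℝ (Fin d), ‖y‖ ≤ ‖x‖ →
      dist (R (φ ‖x‖) x) (R (φ ‖y‖) y) ≤ ((K : ℝ) * t₀ + 1) * dist x y := by
    intro x y hxy
    by_cases hyt : t₀ ≤ ‖y‖
    · have hx0 : φ ‖x‖ = 0 := hφ0 _ (le_trans hyt hxy)
      have hy0 : φ ‖y‖ = 0 := hφ0 _ hyt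
      rw [hx0, hy0, aux_R_zero hd R hR, aux_R_zero hd R hR]
      have : (0:ℝ) ≤ (K : ℝ) * t₀ := by positivity
      nlinarith [dist_nonneg (x := x) (y := y)]
    · push_neg at hyt
      calc dist (R (φ ‖x‖) x) (R (φ ‖y‖) y)
          ≤ dist (R (φ ‖x‖) x) (R (φ ‖x‖) y) + dist (R (φ ‖x‖) y) (R (φ ‖y‖) y) :=
            dist_triangle _ _ _
        _ = dist x y + dist (R (φ ‖x‖) y) (R (φ ‖y‖) y) := by
            rw [aux_dist_R hd R hR]
        _ ≤ dist x y + |φ ‖x‖ - φ ‖y‖| * ‖y‖ := by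
            linarith [aux_dist_RR hd R hR (φ ‖x‖) (φ ‖y‖) y]
        _ ≤ ((K : ℝ) * t₀ + 1) * dist x y := by
            have hlip : |φ ‖x‖ - φ ‖y‖| ≤ (K : ℝ) * |‖x‖ - ‖y‖| := by
              have := hφ.dist_le_mul ‖x‖ (norm_nonneg x) ‖y‖ (norm_nonneg y)
              simpa [Real.dist_eq] using this
            have hnorm : |‖x‖ - ‖y‖| ≤ dist x y := abs_norm_sub_norm_le x y
            have hy : (0:ℝ) ≤ ‖y‖ := norm_nonneg y
            have h1 : |φ ‖x‖ - φ ‖y‖| * ‖y‖ ≤ (K : ℝ) * dist x y * t₀ := by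
              calc |φ ‖x‖ - φ ‖y‖| * ‖y‖ ≤ ((K : ℝ) * dist x y) * ‖y‖ := by
                    apply mul_le_mul_of_nonneg_right _ hy
                    calc |φ ‖x‖ - φ ‖y‖| ≤ (K : ℝ) * |‖x‖ - ‖y‖| := hlip
                      _ ≤ (K : ℝ) * dist x y := by
                        exact mul_le_mul_of_nonneg_left hnorm K.coe_nonneg
                _ ≤ (K : ℝ) * dist x y * t₀ := by
                    apply mul_le_mul_of_nonneg_left hyt.le
                    positivity
            nlinarith
  rcases le_total ‖y‖ ‖x‖ with h | h
  · exact main x y h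
  · rw [dist_comm, dist_comm x y]
    exact main y x h

end Aux

theorem stmt_1 (d : ℕ) (hd : 2 ≤ d)
    (R : ℝ → EuclideanSpace ℝ (Fin d) → EuclideanSpace ℝ (Fin d))
    (hR : ∀ (θ : ℝ) (x : EuclideanSpace ℝ (Fin d)),
      R θ x ⟨0, by omega⟩ = Real.cos θ * x ⟨0, by omega⟩ - Real.sin θ * x ⟨1, by omega⟩ ∧
      R θ x ⟨1, by omega⟩ = Real.sin θ * x ⟨0, by omega⟩ + Real.cos θ * x ⟨1, by omega⟩ ∧
      ∀ i : Fin d, i ≠ ⟨0, by omega⟩ → i ≠ ⟨1, by omega⟩ → R θ x i = x i)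
    (t₀ : ℝ) (ht₀ : 0 < t₀) (ψ : ℝ → ℝ) (K : NNReal)
    (hψ : LipschitzOnWith K ψ (Set.Ici 0))
    (hψ0 : ∀ t : ℝ, t₀ ≤ t → ψ t = 0)
    (Φ : EuclideanSpace ℝ (Fin d) → EuclideanSpace ℝ (Fin d))
    (hΦ : ∀ x, Φ x = R (ψ ‖x‖) x) :
    Function.Bijective Φ ∧ IsBilipOn ((K : ℝ) * t₀ + 1) Φ Set.univ ∧
      ∀ x : EuclideanSpace ℝ (Fin d), t₀ ≤ ‖x‖ → Φ x = x := by
  -- the inverse map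
  set Ψ : EuclideanSpace ℝ (Fin d) → EuclideanSpace ℝ (Fin d) :=
    fun x => R (-(ψ ‖x‖)) x with hΨdef
  have hnormΦ : ∀ x, ‖Φ x‖ = ‖x‖ := fun x => by
    rw [hΦ x, aux_norm_R hd R hR]
  have hnormΨ : ∀ x, ‖Ψ x‖ = ‖x‖ := fun x => by
    rw [hΨdef]; exact aux_norm_R hd R hR _ _
  have hΨΦ : ∀ x, Ψ (Φ x) = x := by
    intro x
    rw [hΨdef]
    simp only
    rw [hnormΦ x, hΦ x, aux_R_comp hd R hR, neg_add_cancel, aux_R_zero hd R hR]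
  have hΦΨ : ∀ x, Φ (Ψ x) = x := by
    intro x
    rw [hΦ (Ψ x), hnormΨ x, hΨdef]
    simp only
    rw [aux_R_comp hd R hR, add_neg_cancel, aux_R_zero hd R hR]
  have hbij : Function.Bijective Φ :=
    ⟨Function.LeftInverse.injective hΨΦ, Function.RightInverse.surjective hΦΨ⟩
  have hL1 : (1:ℝ) ≤ (K : ℝ) * t₀ + 1 := by
    have : (0:ℝ) ≤ (K : ℝ) * t₀ := by positivity
    linarith
  have hLpos : (0:ℝ) < (K : ℝ) * t₀ + 1 := lt_of_lt_of_le one_pos hL1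
  refine ⟨hbij, ?_, ?_⟩
  · intro x _ y _
    have hup : dist (Φ x) (Φ y) ≤ ((K : ℝ) * t₀ + 1) * dist x y := by
      rw [hΦ x, hΦ y]
      exact aux_lip hd R hR t₀ ht₀ ψ K hψ hψ0 x y
    have hψneg : LipschitzOnWith K (fun t => -(ψ t)) (Set.Ici 0) := by
      intro a ha b hb
      have := hψ ha hb
      simpa [edist_dist, Real.dist_eq, abs_sub_comm, neg_sub_neg] using this
    have hdown : dist x y ≤ ((K : ℝ) * t₀ + 1) * dist (Φ x) (Φ y) := by
      have := aux_lip hd R hR t₀ ht₀ (fun t => -(ψ t)) K hψneg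
        (fun t ht => by simp [hψ0 t ht]) (Φ x) (Φ y)
      calc dist x y = dist (Ψ (Φ x)) (Ψ (Φ y)) := by rw [hΨΦ, hΨΦ]
        _ = dist (R (-(ψ ‖Φ x‖)) (Φ x)) (R (-(ψ ‖Φ y‖)) (Φ y)) := rfl
        _ ≤ ((K : ℝ) * t₀ + 1) * dist (Φ x) (Φ y) := this
    constructor
    · rw [inv_mul_le_iff₀ hLpos]
      linarith
    · exact hup
  · intro x hx
    rw [hΦ x, hψ0 _ hx, aux_R_zero hd R hR]
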